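/- arXiv:2502.11445 — 3 statements merged into one kernel-verified Lean document; each statement's English description precedes it below -/
import Mathlib

section
/- Let t₀ > 0, ε > 0 and r > 0. Suppose A ⊆ (0, t₀) is a Lebesgue-measurable set such that for every x ∈ (0, t₀) one has vol(A ∩ (x − r, x + r)) < ε · vol((0, t₀) ∩ (x − r, x + r)), where vol denotes one-dimensional Lebesgue measure. Then vol(A) ≤ 2 ε t₀. -/
open MeasureTheory Set

/-- Measure-theoretic covering lemma (Lemma 6.4): if a measurable set
`A ⊆ (0, t₀)` occupies less than an `ε` fraction of every window
`(x − r, x + r)` relative to `(0, t₀)`, then `vol(A) ≤ 2 ε t₀`. -/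
theorem stmt_0 (t₀ ε r : ℝ) (ht₀ : 0 < t₀) (hε : 0 < ε) (hr : 0 < r)
    (A : Set ℝ) (hA : MeasurableSet A) (hA_sub : A ⊆ Ioo 0 t₀)
    (h : ∀ x ∈ Ioo (0:ℝ) t₀,
      volume (A ∩ Ioo (x - r) (x + r)) <
        ENNReal.ofReal ε * volume (Ioo (0:ℝ) t₀ ∩ Ioo (x - r) (x + r))) :
    volume A ≤ ENNReal.ofReal (2 * ε * t₀) := by
  set m : ℝ := min r t₀ with hm
  have hm0 : 0 < m := lt_min hr ht₀
  set S : Set (ℝ × ℝ) := (Ioo (0:ℝ) t₀ ×ˢ A) ∩ {p : ℝ × ℝ | |p.1 - p.2| < r} with hS_def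
  have hSm : MeasurableSet S := by
    apply (measurableSet_Ioo.prod hA).inter
    exact measurableSet_lt (by fun_prop) measurable_const
  -- first Fubini direction
  have h1 : (volume.prod volume) S
      = ∫⁻ x in Ioo (0:ℝ) t₀, volume (A ∩ Ioo (x - r) (x + r)) := by
    rw [Measure.prod_apply hSm]
    rw [← lintegral_indicator measurableSet_Ioo]
    congr 1
    ext x
    by_cases hx : x ∈ Ioo (0:ℝ) t₀
    · rw [indicator_of_mem hx]
      congr 1
      ext y
      simp only [hS_def, mem_preimage, mem_inter_iff, mem_prod, mem_setOf_eq, mem_Ioo,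
        abs_sub_lt_iff, hx, true_and]
      constructor
      · rintro ⟨hy, h1, h2⟩; exact ⟨hy, by linarith, by linarith⟩
      · rintro ⟨hy, h1, h2⟩; exact ⟨hy, by linarith, by linarith⟩
    · rw [indicator_of_notMem hx]
      have : Prod.mk x ⁻¹' S = ∅ := by
        ext y
        simp only [hS_def, mem_preimage, mem_inter_iff, mem_prod, mem_setOf_eq,
          mem_empty_iff_false, iff_false]
        rintro ⟨⟨hx', _⟩, _⟩; exact hx hx'
      rw [this, measure_empty]
  -- second Fubini direction
  have h2 : (volume.prod volume) S
      = ∫⁻ y in A, volume (Ioo (0:ℝ) t₀ ∩ Ioo (y - r) (y + r)) := by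
    rw [Measure.prod_apply_symm hSm]
    rw [← lintegral_indicator hA]
    congr 1
    ext y
    by_cases hy : y ∈ A
    · rw [indicator_of_mem hy]
      congr 1
      ext x
      simp only [hS_def, mem_preimage, mem_inter_iff, mem_prod, mem_setOf_eq, mem_Ioo,
        abs_sub_lt_iff, hy, and_true]
      constructor
      · rintro ⟨hx, h1, h2⟩; exact ⟨hx, by linarith, by linarith⟩
      · rintro ⟨hx, h1, h2⟩; exact ⟨hx, by linarith, by linarith⟩
    · rw [indicator_of_notMem hy]
      have : (fun x => (x, y)) ⁻¹' S = ∅ := by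
        ext x
        simp only [hS_def, mem_preimage, mem_inter_iff, mem_prod, mem_setOf_eq,
          mem_empty_iff_false, iff_false]
        rintro ⟨⟨_, hy'⟩, _⟩; exact hy hy'
      rw [this, measure_empty]
  -- lower bound
  have hlow : ENNReal.ofReal m * volume A ≤ (volume.prod volume) S := by
    rw [h2]
    simp only [Ioo_inter_Ioo, Real.volume_Ioo]
    calc ENNReal.ofReal m * volume A = ∫⁻ _ in A, ENNReal.ofReal m := by
          rw [setLIntegral_const, mul_comm]
      _ ≤ ∫⁻ y in A, ENNReal.ofReal (min t₀ (y + r) - max 0 (y - r)) := by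
          apply setLIntegral_mono (μ := volume) (s := A)
          · apply Measurable.ennreal_ofReal; fun_prop
          · intro y hy
            have hy' := hA_sub hy
            apply ENNReal.ofReal_le_ofReal
            have h1 := hy'.1
            have h2 := hy'.2
            rcases le_total (y - r) 0 with hc | hc <;>
              rcases le_total t₀ (y + r) with hd | hd <;>
              simp only [max_eq_left hc, max_eq_right hc, min_eq_left hd, min_eq_right hd, hm] <;>
              rcases le_total r t₀ with he | he <;>
              simp only [min_eq_left he, min_eq_right he] <;> linarith
  -- upper bound
  have hup : (volume.prod volume) S
      ≤ ENNReal.ofReal ε * ENNReal.ofReal (2 * m) * ENNReal.ofReal t₀ := by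
    rw [h1]
    calc ∫⁻ x in Ioo (0:ℝ) t₀, volume (A ∩ Ioo (x - r) (x + r))
        ≤ ∫⁻ _ in Ioo (0:ℝ) t₀, ENNReal.ofReal ε * ENNReal.ofReal (2 * m) := by
          apply setLIntegral_mono measurable_const
          intro x hx
          refine le_trans (h x hx).le ?_
          apply mul_le_mul_right
          rw [Ioo_inter_Ioo, Real.volume_Ioo]
          apply ENNReal.ofReal_le_ofReal
          have h1 := hx.1
          have h2 := hx.2
          have ha : min t₀ (x + r) ≤ x + r := min_le_right _ _
          have hb : min t₀ (x + r) ≤ t₀ := min_le_left _ _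
          have hc : (0:ℝ) ≤ max 0 (x - r) := le_max_left _ _
          have hd : x - r ≤ max 0 (x - r) := le_max_right _ _
          rcases le_total r t₀ with he | he <;>
            simp only [hm, min_eq_left he, min_eq_right he] <;> linarith
      _ = ENNReal.ofReal ε * ENNReal.ofReal (2 * m) * ENNReal.ofReal t₀ := by
          rw [setLIntegral_const, Real.volume_Ioo, sub_zero]
  -- combine
  have key : volume A * ENNReal.ofReal m ≤ ENNReal.ofReal (2 * ε * t₀) * ENNReal.ofReal m := by
    calc volume A * ENNReal.ofReal m = ENNReal.ofReal m * volume A := mul_comm _ _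
      _ ≤ ENNReal.ofReal ε * ENNReal.ofReal (2 * m) * ENNReal.ofReal t₀ := hlow.trans hup
      _ = ENNReal.ofReal (2 * ε * t₀) * ENNReal.ofReal m := by
          rw [← ENNReal.ofReal_mul hε.le, ← ENNReal.ofReal_mul (by positivity),
            ← ENNReal.ofReal_mul (by positivity)]
          congr 1; ring
  exact (ENNReal.mul_le_mul_iff_left (by simp [hm0]) ENNReal.ofReal_ne_top).mp key
end

section
/- Let H be a Hilbert space with a Hilbert (orthonormal) basis (u_k)_{k ∈ ℕ}, let (E_k)_{k ∈ ℕ} be real numbers, let v ∈ H with ‖v‖ = 1, let μ ∈ ℝ and 0 < ε < δ, and suppose Σ_k (E_k − μ)² |⟨v, u_k⟩|² ≤ ε². Assume moreover that the set S = { k : |E_k − μ| ≤ δ } is finite and nonempty, with cardinality N. Then max_{k ∈ S} |⟨v, u_k⟩|² ≥ (1 − ε²/δ²) / N. -/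
open scoped InnerProductSpace

/-- Pigeonhole bound (Lemma 4.6 of the paper): if the energy window
`[μ − δ, μ + δ]` contains exactly `N` eigenvalues and the quasimode `v`
satisfies `Σ_k (E_k − μ)² |⟪v, u_k⟫|² ≤ ε²` with `ε < δ`, then some
eigenfunction in the window satisfies `|⟪v, u_k⟫|² ≥ (1 − ε²/δ²)/N`. -/
theorem stmt_10 {H : Type*} [NormedAddCommGroup H] [InnerProductSpace ℂ H]
    [CompleteSpace H]
    (u : HilbertBasis ℕ ℂ H) (E : ℕ → ℝ) (v : H) (hv : ‖v‖ = 1)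
    (μ ε δ : ℝ) (hε : 0 < ε) (hεδ : ε < δ)
    (hsum : Summable fun k : ℕ => (E k - μ) ^ 2 * ‖⟪v, u k⟫_ℂ‖ ^ 2)
    (hbound : (∑' k : ℕ, (E k - μ) ^ 2 * ‖⟪v, u k⟫_ℂ‖ ^ 2) ≤ ε ^ 2)
    (hfin : {k : ℕ | |E k - μ| ≤ δ}.Finite)
    (hne : {k : ℕ | |E k - μ| ≤ δ}.Nonempty) :
    ∃ k ∈ {k : ℕ | |E k - μ| ≤ δ},
      (1 - ε ^ 2 / δ ^ 2) / (hfin.toFinset.card : ℝ) ≤ ‖⟪v, u k⟫_ℂ‖ ^ 2 := by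
  have hδ : (0:ℝ) < δ := hε.trans hεδ
  set g : ℕ → ℝ := fun k => ‖⟪v, u k⟫_ℂ‖ ^ 2 with hg
  -- Parseval
  have hPar : HasSum g 1 := by
    have h := u.hasSum_inner_mul_inner v v
    have h2 : HasSum (fun i : ℕ => ((g i : ℝ) : ℂ)) ((1:ℝ) : ℂ) := by
      have e1 : (fun i : ℕ => ((g i : ℝ) : ℂ)) =
          fun i : ℕ => ⟪v, u i⟫_ℂ * ⟪u i, v⟫_ℂ := by
        funext i
        rw [← inner_conj_symm (u i) v, Complex.mul_conj']
        push_cast [hg]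
        rw [norm_inner_symm]
      have e2 : ⟪v, v⟫_ℂ = ((1:ℝ) : ℂ) := by
        rw [inner_self_eq_norm_sq_to_K, hv]
        norm_num
      rw [e1, ← e2]
      exact h
    exact (Complex.hasSum_ofReal).mp h2
  have hgnn : ∀ k, 0 ≤ g k := fun k => sq_nonneg _
  set S : Finset ℕ := hfin.toFinset with hS
  have hSmem : ∀ k, k ∈ S ↔ |E k - μ| ≤ δ := by
    intro k; simp [hS, Set.Finite.mem_toFinset]
  -- tail bound
  have htail : (∑' k : ((S : Set ℕ)ᶜ : Set ℕ), g k) ≤ ε ^ 2 / δ ^ 2 := by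
    rw [le_div_iff₀ (by positivity), mul_comm]
    have h1 : HasSum (fun k : ((S : Set ℕ)ᶜ : Set ℕ) => δ ^ 2 * g k)
        (δ ^ 2 * ∑' k : ((S : Set ℕ)ᶜ : Set ℕ), g k) :=
      ((hPar.summable.subtype _).hasSum).mul_left _
    have h2 : (∑' k : ((S : Set ℕ)ᶜ : Set ℕ), δ ^ 2 * g k)
        ≤ ∑' k : ((S : Set ℕ)ᶜ : Set ℕ), (E k.1 - μ) ^ 2 * g k.1 := by
      apply Summable.tsum_le_tsum _ (h1.summable) (hsum.subtype _)
      intro k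
      have hk : δ < |E k.1 - μ| := by
        by_contra hcon
        exact k.2 ((hSmem k.1).mpr (le_of_not_gt hcon))
      have : δ ^ 2 ≤ (E k.1 - μ) ^ 2 := by
        rw [← sq_abs (E k.1 - μ)]
        exact pow_le_pow_left₀ hδ.le hk.le 2
      exact mul_le_mul_of_nonneg_right this (hgnn _)
    have h3 : (∑' k : ((S : Set ℕ)ᶜ : Set ℕ), (E k.1 - μ) ^ 2 * g k.1)
        ≤ ∑' k : ℕ, (E k - μ) ^ 2 * g k :=
      Summable.tsum_subtype_le (fun k => (E k - μ) ^ 2 * g k) _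
        (fun k => mul_nonneg (sq_nonneg _) (hgnn k)) hsum
    calc δ ^ 2 * ∑' k : ((S : Set ℕ)ᶜ : Set ℕ), g k
        = ∑' k : ((S : Set ℕ)ᶜ : Set ℕ), δ ^ 2 * g k := h1.tsum_eq.symm
      _ ≤ ∑' k : ((S : Set ℕ)ᶜ : Set ℕ), (E k.1 - μ) ^ 2 * g k.1 := h2
      _ ≤ ∑' k : ℕ, (E k - μ) ^ 2 * g k := h3
      _ ≤ ε ^ 2 := hbound
  -- main sum bound
  have hsplit : (∑ k ∈ S, g k) + (∑' k : ((S : Set ℕ)ᶜ : Set ℕ), g k) = 1 := by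
    rw [Summable.sum_add_tsum_compl hPar.summable, hPar.tsum_eq]
  have hmain : 1 - ε ^ 2 / δ ^ 2 ≤ ∑ k ∈ S, g k := by linarith
  -- pigeonhole
  have hSne : S.Nonempty := by
    obtain ⟨k, hk⟩ := hne
    exact ⟨k, (hSmem k).mpr hk⟩
  have hcard : (0:ℝ) < (S.card : ℝ) := by
    exact_mod_cast Finset.card_pos.mpr hSne
  have hle : (∑ k ∈ S, (1 - ε ^ 2 / δ ^ 2) / (S.card : ℝ)) ≤ ∑ k ∈ S, g k := by
    rw [Finset.sum_const, nsmul_eq_mul, mul_div_cancel₀ _ hcard.ne']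
    exact hmain
  obtain ⟨k, hkS, hk⟩ := Finset.exists_le_of_sum_le hSne hle
  exact ⟨k, (hSmem k).mp hkS, hk⟩
end

section
/- Let t* ∈ ℝ, r > 0, a > 0, M ≥ 0 and ε > 0, set J = [t* − r, t* + r], and let F : J → ℝ be a C² function with |F''(t)| ≤ M for all t ∈ J, |F'(t*)| ≥ a, |F(t*)| < ε, and r ≤ a / (2M) (this last condition being vacuous if M = 0). Then the Lebesgue measure of the set { t ∈ J : |F(t)| < ε } is at most 8 ε / a. -/
open MeasureTheory Set

/-- Transversality / sublevel-set measure estimate underlying Proposition 4.4: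
if `F` is C² on `J = [t* − r, t* + r]` with `|F''| ≤ M`, `|F'(t*)| ≥ a`,
`|F(t*)| < ε` and `r ≤ a/(2M)` (vacuous for `M = 0`), then
`vol{t ∈ J : |F(t)| < ε} ≤ 8 ε / a`. -/
theorem stmt_12 (tstar r a M ε : ℝ) (hr : 0 < r) (ha : 0 < a) (hM : 0 ≤ M)
    (hε : 0 < ε) (F : ℝ → ℝ)
    (hF : ContDiffOn ℝ 2 F (Icc (tstar - r) (tstar + r)))
    (hF'' : ∀ t ∈ Icc (tstar - r) (tstar + r),
      |derivWithin (derivWithin F (Icc (tstar - r) (tstar + r)))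
        (Icc (tstar - r) (tstar + r)) t| ≤ M)
    (hF' : a ≤ |derivWithin F (Icc (tstar - r) (tstar + r)) tstar|)
    (hF0 : |F tstar| < ε)
    (hrM : M = 0 ∨ r ≤ a / (2 * M)) :
    volume {t ∈ Icc (tstar - r) (tstar + r) | |F t| < ε} ≤
      ENNReal.ofReal (8 * ε / a) := by
  set J := Icc (tstar - r) (tstar + r) with hJdef
  have hlt : tstar - r < tstar + r := by linarith
  have hud : UniqueDiffOn ℝ J := uniqueDiffOn_Icc hlt
  have hconv : Convex ℝ J := convex_Icc _ _
  have htJ : tstar ∈ J := ⟨by linarith, by linarith⟩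
  set F' := derivWithin F J with hF'def
  have hdiffF : DifferentiableOn ℝ F J := hF.differentiableOn (by norm_num)
  have hC1 : ContDiffOn ℝ 1 F' J := hF.derivWithin hud (by norm_num)
  have hdiffF' : DifferentiableOn ℝ F' J := hC1.differentiableOn (by norm_num)
  -- bound M * r ≤ a / 2
  have hMr : M * r ≤ a / 2 := by
    rcases hrM with h0 | h2
    · simp [h0]; positivity
    · have hMpos : 0 < M := by
        rcases lt_or_eq_of_le hM with h | h
        · exact h
        · exfalso; rw [← h] at h2; simp at h2; linarith
      calc M * r ≤ M * (a / (2 * M)) := by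
            exact mul_le_mul_of_nonneg_left h2 hM
        _ = a / 2 := by field_simp
  -- Lipschitz bound for F'
  have hLip : ∀ t ∈ J, |F' t - F' tstar| ≤ a / 2 := by
    intro t ht
    have h1 : ‖F' t - F' tstar‖ ≤ M * ‖t - tstar‖ :=
      hconv.norm_image_sub_le_of_norm_derivWithin_le hdiffF' hF'' htJ ht
    have h2 : |t - tstar| ≤ r := by
      rw [abs_le]; constructor <;> [linarith [ht.1]; linarith [ht.2]]
    calc |F' t - F' tstar| ≤ M * |t - tstar| := h1
      _ ≤ M * r := by exact mul_le_mul_of_nonneg_left h2 hM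
      _ ≤ a / 2 := hMr
  -- key lower bound
  have key : ∀ t ∈ J, a / 2 * |t - tstar| ≤ |F t - F tstar| := by
    intro t ht
    have hg : ∀ x ∈ J, HasDerivWithinAt (fun y => F y - F' tstar * y)
        (F' x - F' tstar) J x := by
      intro x hx
      have h1 : HasDerivWithinAt F (F' x) J x :=
        (hdiffF x hx).hasDerivWithinAt
      have h2 : HasDerivWithinAt (fun y => F' tstar * y) (F' tstar) J x := by
        simpa using (hasDerivWithinAt_id x J).const_mul (F' tstar)
      exact h1.sub h2
    have hbd : ∀ x ∈ J, ‖F' x - F' tstar‖ ≤ a / 2 := fun x hx => hLip x hx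
    have h3 : ‖(F t - F' tstar * t) - (F tstar - F' tstar * tstar)‖ ≤
        a / 2 * ‖t - tstar‖ :=
      hconv.norm_image_sub_le_of_norm_hasDerivWithin_le hg hbd htJ ht
    have h4 : |F t - F tstar - F' tstar * (t - tstar)| ≤ a / 2 * |t - tstar| := by
      have : (F t - F' tstar * t) - (F tstar - F' tstar * tstar)
          = F t - F tstar - F' tstar * (t - tstar) := by ring
      rw [this] at h3; exact h3
    have h5 : a * |t - tstar| ≤ |F' tstar * (t - tstar)| := by
      rw [abs_mul]
      exact mul_le_mul_of_nonneg_right hF' (abs_nonneg _)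
    have h6 : |F' tstar * (t - tstar)| - |F t - F tstar - F' tstar * (t - tstar)|
        ≤ |F t - F tstar| := by
      have := abs_sub_abs_le_abs_sub (F' tstar * (t - tstar)) (F' tstar * (t - tstar) - (F t - F tstar))
      have heq : F' tstar * (t - tstar) - (F' tstar * (t - tstar) - (F t - F tstar)) = F t - F tstar := by ring
      rw [heq] at this
      have heq2 : |F' tstar * (t - tstar) - (F t - F tstar)| = |F t - F tstar - F' tstar * (t - tstar)| := by
        rw [abs_sub_comm]
      linarith [this, heq2 ▸ this]
    nlinarith [abs_nonneg (t - tstar)]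
  -- the set is contained in a small interval
  have hsub : {t ∈ J | |F t| < ε} ⊆ Icc (tstar - 4 * ε / a) (tstar + 4 * ε / a) := by
    intro t ht
    obtain ⟨htJ', hFt⟩ := ht
    have h1 : a / 2 * |t - tstar| ≤ |F t - F tstar| := key t htJ'
    have h2 : |F t - F tstar| ≤ |F t| + |F tstar| := abs_sub _ _
    have h3 : a / 2 * |t - tstar| < 2 * ε := by linarith
    have h4 : |t - tstar| ≤ 4 * ε / a := by
      rw [le_div_iff₀ ha]
      nlinarith
    rw [abs_le] at h4
    exact ⟨by linarith [h4.1], by linarith [h4.2]⟩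
  calc volume {t ∈ J | |F t| < ε}
      ≤ volume (Icc (tstar - 4 * ε / a) (tstar + 4 * ε / a)) := measure_mono hsub
    _ = ENNReal.ofReal (8 * ε / a) := by
        rw [Real.volume_Icc]
        congr 1
        ring
end
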